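/- In the two-user algorithm, let k_min = min{k : A_k ≥ γ B_k} (which exists since A_K ≥ 0 = γ B_K). Then the splitting fraction α_{k_min} = (γ B_{k_min − 1} − A_{k_min − 1})/(R_{1 k_min} + γ R_{2 k_min}) satisfies 0 ≤ α_{k_min} ≤ 1, where A_0 = 0 and B_0 = Σ_{m=1}^K R_{2m}. -/
import Mathlib


/-- The splitting fraction `α_{k_min}` of the two-user algorithm lies in `[0, 1]`. -/
theorem two_user_alpha_in_unit_interval (K : ℕ) (hK : 1 ≤ K) (γ : ℝ) (hγ : 0 < γ)
    (R1 R2 : ℕ → ℝ)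
    (hR1 : ∀ k ∈ Finset.Icc 1 K, 0 < R1 k)
    (hR2 : ∀ k ∈ Finset.Icc 1 K, 0 < R2 k)
    (A B : ℕ → ℝ)
    (hA : ∀ k, A k = ∑ m ∈ Finset.Icc 1 k, R1 m)
    (hB : ∀ k, B k = ∑ m ∈ Finset.Icc (k + 1) K, R2 m)
    (kmin : ℕ) (hk1 : 1 ≤ kmin) (hkK : kmin ≤ K)
    (hge : γ * B kmin ≤ A kmin)
    (hmin : ∀ j, 1 ≤ j → j < kmin → A j < γ * B j)
    (α : ℝ)
    (hα : α = (γ * B (kmin - 1) - A (kmin - 1)) / (R1 kmin + γ * R2 kmin)) :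
    0 ≤ α ∧ α ≤ 1 := by
  have hkmem : kmin ∈ Finset.Icc 1 K := Finset.mem_Icc.mpr ⟨hk1, hkK⟩
  have hR1k := hR1 kmin hkmem
  have hR2k := hR2 kmin hkmem
  have hden : 0 < R1 kmin + γ * R2 kmin := by positivity
  have hkm : kmin - 1 + 1 = kmin := Nat.succ_pred_eq_of_pos hk1
  have hA' : A kmin = A (kmin - 1) + R1 kmin := by
    rw [hA, hA, ← hkm, Finset.sum_Icc_succ_top (by omega : 1 ≤ kmin - 1 + 1)]; simp
  have hB' : B (kmin - 1) = R2 kmin + B kmin := by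
    rw [hB, hB, hkm]
    have hins : Finset.Icc kmin K = insert kmin (Finset.Icc (kmin + 1) K) := by
      ext x; simp [Finset.mem_Icc]; omega
    rw [hins, Finset.sum_insert (by simp)]
  have hnum : 0 ≤ γ * B (kmin - 1) - A (kmin - 1) := by
    rcases eq_or_lt_of_le hk1 with h1 | h1
    · have hA0 : A (kmin - 1) = 0 := by
        rw [hA, ← h1]; simp
      have hB0 : 0 ≤ B (kmin - 1) := by
        rw [hB]
        exact Finset.sum_nonneg fun m hm => le_of_lt (hR2 m (by
          simp only [Finset.mem_Icc] at hm ⊢; omega))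
      nlinarith
    · have := hmin (kmin - 1) (by omega) (by omega)
      linarith
  have hle : γ * B (kmin - 1) - A (kmin - 1) ≤ R1 kmin + γ * R2 kmin := by
    nlinarith
  constructor
  · rw [hα]; exact div_nonneg hnum hden.le
  · rw [hα]; exact (div_le_one hden).mpr hle
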